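/- For every d ≥ 1 there exists a knapsack polytope whose integer hull has a vertex v with |supp(v)| = log₂(Δ) + 1, where Δ = ‖a‖_∞. Concretely, for a = (2^0, 2^1, ..., 2^{d-1}) and b = 2^d − 1, the all-ones vector is a vertex of Conv({x ∈ ℤ^d_{≥0} : aᵀx = b}) and has support of size d = log₂(Δ) + 1. -/

import Mathlib

/-- The integer hull of the knapsack polytope `{x ≥ 0 : aᵀx = b}`. -/
def knapsackHull {n : ℕ} (a : Fin n → ℤ) (b : ℤ) : Set (Fin n → ℝ) :=
  convexHull ℝ
    {x | ∃ z : Fin n → ℤ, (∀ i, 0 ≤ z i) ∧ (∑ i, a i * z i) = b ∧ x = fun i => (z i : ℝ)}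

/-- `v` is a vertex of `P` if `v ∈ P` and `v` is not in the convex hull of `P \ {v}`. -/
def IsVertex {n : ℕ} (P : Set (Fin n → ℝ)) (v : Fin n → ℝ) : Prop :=
  v ∈ P ∧ v ∉ convexHull ℝ (P \ {v})


lemma key : ∀ (d : ℕ) (z : Fin d → ℤ), (∀ i, 0 ≤ z i) →
    (∑ i : Fin d, 2 ^ (i : ℕ) * z i) = 2 ^ d - 1 →
    ((d : ℤ) ≤ ∑ i, z i ∧ ((∑ i, z i) = d → ∀ i, z i = 1)) := by
  intro d
  induction d with
  | zero => intro z _ _; simp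
  | succ d ih =>
    intro z hz heq
    rw [Fin.sum_univ_succ] at heq
    simp only [Fin.val_zero, pow_zero, one_mul, Fin.val_succ, pow_succ] at heq
    set S := ∑ j : Fin d, 2 ^ (j : ℕ) * z j.succ with hS
    have hrw : (∑ x : Fin d, 2 ^ (x : ℕ) * 2 * z x.succ) = 2 * S := by
      rw [hS, Finset.mul_sum]
      exact Finset.sum_congr rfl fun x _ => by ring
    have heq2 : z 0 + 2 * S = 2 * 2 ^ d - 1 := by rw [hrw] at heq; omega
    have hSnn : 0 ≤ S := Finset.sum_nonneg fun j _ => mul_nonneg (by positivity) (hz _)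
    have hz0 : 0 ≤ z 0 := hz 0
    obtain ⟨t, ht, hzt⟩ : ∃ t : ℤ, 0 ≤ t ∧ z 0 = 2 * t + 1 := by
      refine ⟨(z 0 - 1) / 2, ?_, ?_⟩ <;> omega
    have hSt : S + t = 2 ^ d - 1 := by omega
    rcases Nat.eq_zero_or_pos d with rfl | hdpos
    · simp only [pow_zero] at hSt
      have hS0 : S = 0 := by simp [hS]
      have ht0 : t = 0 := by omega
      constructor
      · rw [Fin.sum_univ_one]; omega
      · intro _ i
        have h1 : (i : ℕ) < 1 := i.isLt
        have : i = 0 := Fin.ext (by omega)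
        rw [this]; omega
    · set j0 : Fin d := ⟨0, hdpos⟩ with hj0
      set w : Fin d → ℤ := fun j => z j.succ + if j = j0 then t else 0 with hw
      have hwnn : ∀ j, 0 ≤ w j := by
        intro j; rw [hw]; dsimp only; split <;> [linarith [hz j.succ]; simpa using hz j.succ]
      have hwsum : (∑ j : Fin d, 2 ^ (j : ℕ) * w j) = 2 ^ d - 1 := by
        rw [hw]
        simp only [mul_add, mul_ite, mul_zero]
        rw [Finset.sum_add_distrib, Finset.sum_ite_eq' Finset.univ j0]
        simp [hj0, ← hS, hSt]
      obtain ⟨hge, huniq⟩ := ih w hwnn hwsum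
      have hwtot : (∑ j, w j) = (∑ j : Fin d, z j.succ) + t := by
        rw [hw]
        rw [Finset.sum_add_distrib, Finset.sum_ite_eq' Finset.univ j0]
        simp
      have hztot : (∑ i, z i) = z 0 + ∑ j : Fin d, z j.succ := Fin.sum_univ_succ z
      constructor
      · push_cast; omega
      · intro hsum i
        have ht0 : t = 0 := by push_cast at hsum ⊢; omega
        have hwd : (∑ j, w j) = d := by push_cast at hsum ⊢; omega
        have hall := huniq hwd
        refine Fin.cases ?_ ?_ i
        · omega
        · intro j
          have hj := hall j
          rw [hw] at hj
          dsimp only at hj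
          split at hj <;> omega

variable {n : ℕ}

lemma sum_linear : IsLinearMap ℝ (fun x : Fin n → ℝ => ∑ i, x i) := by
  constructor
  · intro x y; simp [Finset.sum_add_distrib]
  · intro c x; simp [Finset.mul_sum]

lemma core (s : Set (Fin n → ℝ)) (c : ℝ) (hlb : ∀ y ∈ s, c ≤ ∑ i, y i)
    {x : Fin n → ℝ} (hx : x ∈ convexHull ℝ s) (hxc : (∑ i, x i) = c) :
    ∃ (ι : Type) (t : Finset ι) (w : ι → ℝ) (z : ι → Fin n → ℝ),
      (∀ i ∈ t, 0 ≤ w i) ∧ (∑ i ∈ t, w i) = 1 ∧ (∀ i ∈ t, z i ∈ s) ∧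
      x = ∑ i ∈ t, w i • z i ∧ ∀ i ∈ t, w i ≠ 0 → (∑ j, z i j) = c := by
  rw [convexHull_eq] at hx
  obtain ⟨ι, t, w, z, hw0, hw1, hzs, hxeq⟩ := hx
  rw [Finset.centerMass_eq_of_sum_1 _ _ hw1] at hxeq
  have hL : (∑ j, x j) = ∑ i ∈ t, w i * ∑ j, z i j := by
    rw [← hxeq]
    simp only [Finset.sum_apply, Pi.smul_apply, smul_eq_mul]
    rw [Finset.sum_comm]
    exact Finset.sum_congr rfl fun i _ => by rw [Finset.mul_sum]
  have hzero : ∑ i ∈ t, w i * ((∑ j, z i j) - c) = 0 := by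
    simp only [mul_sub, Finset.sum_sub_distrib, ← Finset.sum_mul, hw1, one_mul, ← hL, hxc]
    ring
  have hnn : ∀ i ∈ t, 0 ≤ w i * ((∑ j, z i j) - c) := fun i hi =>
    mul_nonneg (hw0 i hi) (by linarith [hlb (z i) (hzs i hi)])
  have hall := (Finset.sum_eq_zero_iff_of_nonneg hnn).mp hzero
  exact ⟨ι, t, w, z, hw0, hw1, hzs, hxeq.symm, fun i hi hwi => by
    have := hall i hi
    rcases mul_eq_zero.mp this with h | h
    · exact absurd h hwi
    · linarith⟩

lemma faceEq (s : Set (Fin n → ℝ)) (c : ℝ) (v : Fin n → ℝ)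
    (hlb : ∀ y ∈ s, c ≤ ∑ i, y i) (hface : ∀ y ∈ s, (∑ i, y i) = c → y = v)
    {x : Fin n → ℝ} (hx : x ∈ convexHull ℝ s) (hxc : (∑ i, x i) = c) : x = v := by
  obtain ⟨ι, t, w, z, hw0, hw1, hzs, hxeq, hkey⟩ := core s c hlb hx hxc
  rw [hxeq]
  have : ∀ i ∈ t, w i • z i = w i • v := by
    intro i hi
    by_cases hwi : w i = 0
    · simp [hwi]
    · rw [hface (z i) (hzs i hi) (hkey i hi hwi)]
  rw [Finset.sum_congr rfl this, ← Finset.sum_smul, hw1, one_smul]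

lemma faceEmpty (s : Set (Fin n → ℝ)) (c : ℝ)
    (hlb : ∀ y ∈ s, c ≤ ∑ i, y i) (hne : ∀ y ∈ s, (∑ i, y i) ≠ c)
    {x : Fin n → ℝ} (hx : x ∈ convexHull ℝ s) (hxc : (∑ i, x i) = c) : False := by
  obtain ⟨ι, t, w, z, hw0, hw1, hzs, hxeq, hkey⟩ := core s c hlb hx hxc
  have : ∀ i ∈ t, w i = 0 := by
    intro i hi
    by_contra hwi
    exact hne (z i) (hzs i hi) (hkey i hi hwi)
  rw [Finset.sum_eq_zero this] at hw1
  norm_num at hw1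

lemma geom : ∀ m : ℕ, (∑ i ∈ Finset.range m, (2:ℤ) ^ i) = 2 ^ m - 1 := by
  intro m
  induction m with
  | zero => simp
  | succ m ihm => rw [Finset.sum_range_succ, ihm]; ring

theorem stmt5 (d : ℕ) (hd : 1 ≤ d) :
    IsVertex (knapsackHull (fun i : Fin d => 2 ^ (i : ℕ)) (2 ^ d - 1)) (fun _ => 1) ∧
    (Function.support (fun _ : Fin d => (1 : ℝ))).ncard = d ∧
    (d : ℝ) = Real.logb 2 ((2 : ℝ) ^ (d - 1)) + 1 := by
  set v : Fin d → ℝ := fun _ => 1 with hv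
  set S : Set (Fin d → ℝ) :=
    {x | ∃ z : Fin d → ℤ, (∀ i, 0 ≤ z i) ∧ (∑ i : Fin d, (2:ℤ) ^ (i : ℕ) * z i) = 2 ^ d - 1 ∧
      x = fun i => (z i : ℝ)} with hSdef
  have hhull : knapsackHull (fun i : Fin d => (2:ℤ) ^ (i : ℕ)) ((2:ℤ) ^ d - 1) = convexHull ℝ S := rfl
  have hgeom : (∑ i : Fin d, (2:ℤ) ^ (i : ℕ) * 1) = 2 ^ d - 1 := by
    simp only [mul_one]
    rw [Fin.sum_univ_eq_sum_range (fun i => (2:ℤ) ^ i)]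
    exact geom d
  have hvS : v ∈ S := ⟨fun _ => 1, fun _ => zero_le_one, hgeom, by funext i; simp [hv]⟩
  have hSlb : ∀ y ∈ S, (d : ℝ) ≤ ∑ i, y i := by
    rintro y ⟨z, hznn, hzeq, rfl⟩
    have := (key d z hznn hzeq).1
    beta_reduce
    exact_mod_cast this
  have hSface : ∀ y ∈ S, (∑ i, y i) = (d : ℝ) → y = v := by
    rintro y ⟨z, hznn, hzeq, rfl⟩ hsum
    have hz : (∑ i, z i) = (d : ℤ) := by beta_reduce at hsum; exact_mod_cast hsum
    have := (key d z hznn hzeq).2 hz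
    funext i
    simp [this i, hv]
  have hPlb : ∀ x ∈ convexHull ℝ S, (d : ℝ) ≤ ∑ i, x i :=
    fun x hx => convexHull_min hSlb (convex_halfSpace_ge sum_linear (d : ℝ)) hx
  have hvsum : (∑ i, v i) = (d : ℝ) := by simp [hv]
  have hPface : ∀ x ∈ convexHull ℝ S, (∑ i, x i) = (d : ℝ) → x = v :=
    fun x hx hxc => faceEq S (d : ℝ) v hSlb hSface hx hxc
  rw [IsVertex, hhull]
  refine ⟨⟨subset_convexHull ℝ S hvS, ?_⟩, ?_, ?_⟩
  · intro hcon
    refine faceEmpty (convexHull ℝ S \ {v}) (d : ℝ) ?_ ?_ hcon hvsum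
    · exact fun y hy => hPlb y hy.1
    · rintro y ⟨hyP, hyv⟩ hyc
      exact hyv (hPface y hyP hyc)
  · rw [Function.support_const one_ne_zero, Set.ncard_univ, Nat.card_eq_fintype_card,
      Fintype.card_fin]
  · rw [Real.logb_pow, Real.logb_self_eq_one (by norm_num)]
    have : ((d - 1 : ℕ) : ℝ) = (d : ℝ) - 1 := by
      rw [Nat.cast_sub hd]; norm_num
    rw [this]; ring
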